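/- Let R be a commutative Hopfian integral domain and φ : R[x] → R[x] a surjective ring homomorphism with φ(R) ⊆ R. Then φ(x) = b₀ + b₁x where b₁ is a unit of R, and φ is an automorphism of R[x]. -/

import Mathlib

open Polynomial in
theorem stmt_9 {R : Type*} [CommRing R] [IsDomain R]
    (hHopf : ∀ g : R →+* R, Function.Surjective g → Function.Bijective g)
    (φ : R[X] →+* R[X]) (hφ : Function.Surjective φ)
    (hR : ∀ r : R, ∃ s : R, φ (C r) = C s) :
    (∃ b₀ b₁ : R, IsUnit b₁ ∧ φ X = C b₀ + C b₁ * X) ∧ Function.Bijective φ := by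
  classical
  choose g hg using hR
  have Cinj : Function.Injective (C : R → R[X]) := C_injective
  have gone : g 1 = 1 := Cinj <| by rw [← hg, C_1, map_one]
  have gzero : g 0 = 0 := Cinj <| by rw [← hg, C_0, map_zero]
  have gmul : ∀ r s, g (r * s) = g r * g s := fun r s =>
    Cinj <| by rw [← hg, C_mul, map_mul, hg, hg, ← C_mul]
  have gadd : ∀ r s, g (r + s) = g r + g s := fun r s =>
    Cinj <| by rw [← hg, C_add, map_add, hg, hg, ← C_add]
  let G : R →+* R := ⟨⟨⟨g, gone⟩, gmul⟩, gzero, gadd⟩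
  have hGg : ∀ r, G r = g r := fun _ => rfl
  have hcomp : ∀ p : R[X], φ p = (p.map G).comp (φ X) := by
    intro p
    rw [comp, eval₂_map]
    induction p using Polynomial.induction_on' with
    | add p q hp hq => rw [map_add, hp, hq, eval₂_add]
    | monomial n a =>
        rw [eval₂_monomial, ← C_mul_X_pow_eq_monomial, map_mul, map_pow, hg,
          RingHom.comp_apply, hGg]
  obtain ⟨q, hq⟩ := hφ X
  have hq' : X = (q.map G).comp (φ X) := by rw [← hcomp q, hq]
  have hdeg : 1 = (q.map G).natDegree * (φ X).natDegree := by
    have h := congrArg natDegree hq'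
    rwa [natDegree_X, natDegree_comp] at h
  have hdeg1 : (φ X).natDegree = 1 :=
    Nat.dvd_one.mp ⟨_, by rw [mul_comm]; exact hdeg⟩
  have hqdeg1 : (q.map G).natDegree = 1 := Nat.dvd_one.mp ⟨_, hdeg⟩
  set b₀ := (φ X).coeff 0 with hb₀
  set b₁ := (φ X).coeff 1 with hb₁
  have hX : φ X = C b₀ + C b₁ * X := by
    rw [add_comm]; exact eq_X_add_C_of_natDegree_le_one hdeg1.le
  have hb₁lead : (φ X).leadingCoeff = b₁ := by
    rw [leadingCoeff, hdeg1]
  have hunit : IsUnit b₁ := by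
    have h := congrArg leadingCoeff hq'
    rw [leadingCoeff_X, leadingCoeff_comp (by rw [hdeg1]; exact one_ne_zero),
      hb₁lead, hqdeg1, pow_one] at h
    exact IsUnit.of_mul_eq_one _ (by rw [mul_comm, ← h])
  have hGsurj : Function.Surjective G := by
    intro s
    obtain ⟨p, hp⟩ := hφ (C s)
    have h1 : C s = (p.map G).comp (φ X) := by rw [← hcomp, hp]
    have h2 : (p.map G).natDegree = 0 := by
      have h := congrArg natDegree h1
      rw [natDegree_C, natDegree_comp, hdeg1, mul_one] at h
      exact h.symm
    have h3 : p.map G = C (G (p.coeff 0)) := by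
      rw [eq_C_of_natDegree_eq_zero h2, coeff_map]
    rw [h3, C_comp] at h1
    exact ⟨p.coeff 0, (Cinj h1).symm⟩
  have hG := hHopf G hGsurj
  have hb₁ne : b₁ ≠ 0 := hunit.ne_zero
  have hinj : Function.Injective φ := by
    refine (injective_iff_map_eq_zero φ).mpr fun p hp0 => ?_
    by_contra hne
    have hm : p.map G ≠ 0 := fun h =>
      hne (Polynomial.map_injective G hG.1 (by simpa using h))
    have h := congrArg leadingCoeff (hp0.symm.trans (hcomp p))
    rw [leadingCoeff_zero, leadingCoeff_comp (by rw [hdeg1]; exact one_ne_zero),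
      hb₁lead] at h
    exact (mul_ne_zero (leadingCoeff_ne_zero.mpr hm) (pow_ne_zero _ hb₁ne)) h.symm
  exact ⟨⟨b₀, b₁, hunit, hX⟩, hinj, hφ⟩
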